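/- Let d ≥ k ≥ 1, let H be an invertible real symmetric d×d matrix, let D be a k×d real matrix with det(D H^{−1} D^t) ≠ 0, and let V be a (d−k)×d real matrix whose rows are orthonormal and which satisfies V D^t = 0. Then the d×d matrix whose first d−k rows are the rows of the matrix VH and whose last k rows are the rows of D has nonzero determinant. -/

import Mathlib

open Matrix

noncomputable section

/-- The canonical index bijection `Fin (d-k) ⊕ Fin k ≃ Fin d` for `k ≤ d`. -/
def sumEquiv (d k : ℕ) (hdk : k ≤ d) : (Fin (d - k) ⊕ Fin k) ≃ Fin d :=
  finSumFinEquiv.trans (finCongr (Nat.sub_add_cancel hdk))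

/-- **Lemma (transversality, linear algebra form).** Let `H` be an invertible
real symmetric `d × d` matrix, `D` a `k × d` matrix with
`det (D H⁻¹ Dᵀ) ≠ 0`, and `V` a `(d-k) × d` matrix with orthonormal rows
(`V Vᵀ = 1`) satisfying `V Dᵀ = 0`. Then the `d × d` matrix whose first `d-k`
rows are the rows of `V H` and whose last `k` rows are the rows of `D` has
nonzero determinant. -/
theorem stacked_matrix_det_ne_zero
    (d k : ℕ) (hdk : k ≤ d) (hk : 1 ≤ k)
    (H : Matrix (Fin d) (Fin d) ℝ) (hHsymm : H.IsSymm) (hHinv : IsUnit H.det)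
    (D : Matrix (Fin k) (Fin d) ℝ) (hD : (D * H⁻¹ * Dᵀ).det ≠ 0)
    (V : Matrix (Fin (d - k)) (Fin d) ℝ) (hV : V * Vᵀ = 1) (hVD : V * Dᵀ = 0) :
    ((Matrix.fromRows (V * H) D).submatrix (id : Fin (d - k) ⊕ Fin k → _)
        (sumEquiv d k hdk)).det ≠ 0 := by
  intro h
  apply hD
  have hVH : V * H * H⁻¹ = V := by
    rw [Matrix.mul_assoc, Matrix.mul_nonsing_inv H hHinv, Matrix.mul_one]
  have hblock : Matrix.fromRows (V * H) D * H⁻¹ * (Matrix.fromRows V D)ᵀ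
      = Matrix.fromBlocks 1 0 (D * H⁻¹ * Vᵀ) (D * H⁻¹ * Dᵀ) := by
    rw [Matrix.fromRows_mul, hVH, Matrix.transpose_fromRows,
      Matrix.fromRows_mul_fromCols, hV, hVD]
  have hsub : (Matrix.fromRows (V * H) D).submatrix id ⇑(sumEquiv d k hdk) *
        (H⁻¹.submatrix ⇑(sumEquiv d k hdk) ⇑(sumEquiv d k hdk)) *
        ((Matrix.fromRows V D)ᵀ.submatrix ⇑(sumEquiv d k hdk) id)
      = Matrix.fromRows (V * H) D * H⁻¹ * (Matrix.fromRows V D)ᵀ := by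
    rw [Matrix.submatrix_mul_equiv, Matrix.submatrix_mul_equiv,
      Matrix.submatrix_id_id]
  have hdet := congrArg Matrix.det hsub
  rw [hblock, Matrix.det_fromBlocks_zero₁₂, Matrix.det_one, one_mul,
    Matrix.det_mul, Matrix.det_mul, h, zero_mul, zero_mul] at hdet
  exact hdet.symm

end
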